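/- Let A be a finite alphabet and let x ∈ A^ℤ be aperiodic. Suppose (p,t) and (q,s) are strong rank-2 cuts of x and p divides q. Then (p,t) and (q,s) coincide: for the unique integer k with t+kp ≤ s < t+(k+1)p, either [t+kp, s) ⊆ Per_q(x) or [s, t+(k+1)p) ⊆ Per_q(x). -/

import Mathlib

namespace ToeplitzFR

open Set

variable {A B C : Type*}

/-- The shift map `S` on `ℤ → A`: `S(x)(i) = x(i+1)`. -/
def shift (x : ℤ → A) : ℤ → A := fun i => x (i + 1)

/-- The inverse shift map `S⁻¹`. -/
def shiftInv (x : ℤ → A) : ℤ → A := fun i => x (i - 1)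

/-- The shift by `k`: `S^k`. -/
def shiftBy (k : ℤ) (x : ℤ → A) : ℤ → A := fun i => x (i + k)

/-- The finite word `x[i, i+n)`. -/
def factorAt (x : ℤ → A) (i : ℤ) (n : ℕ) : List A :=
  (List.range n).map fun j => x (i + j)

/-- `x` is a periodic point of the shift. -/
def IsPeriodicPoint (x : ℤ → A) : Prop := ∃ p : ℕ, 0 < p ∧ ∀ i : ℤ, x (i + p) = x i

def IsAperiodicPoint (x : ℤ → A) : Prop := ¬ IsPeriodicPoint x

/-- `Per_p(x)`. -/
def PerSet (x : ℤ → A) (p : ℕ) : Set ℤ := {i : ℤ | ∀ k : ℤ, x (i + k * p) = x i}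

/-- `Per(x) = ⋃_{p>1} Per_p(x)`. -/
def PerAll (x : ℤ → A) : Set ℤ := {i : ℤ | ∃ p : ℕ, 1 < p ∧ i ∈ PerSet x p}

/-- `x` is a Toeplitz sequence. -/
def IsToeplitz (x : ℤ → A) : Prop := ∀ i : ℤ, ∃ p : ℕ, 1 < p ∧ i ∈ PerSet x p

/-- The shift orbit of `x`. -/
def orbit (x : ℤ → A) : Set (ℤ → A) := {y | ∃ k : ℤ, y = shiftBy k x}

/-- `X` is the Toeplitz subshift generated by the Toeplitz sequence `x`. -/
def ToeplitzGenerates [TopologicalSpace A] (x : ℤ → A) (X : Set (ℤ → A)) : Prop :=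
  IsToeplitz x ∧ X = closure (orbit x)

/-- `X` is a Toeplitz subshift. -/
def IsToeplitzSubshift [TopologicalSpace A] (X : Set (ℤ → A)) : Prop :=
  ∃ x : ℤ → A, ToeplitzGenerates x X

/-- The `p`-skeleton of `x`, with `none` as the blank symbol. -/
noncomputable def Skel (x : ℤ → A) (p : ℕ) : ℤ → Option A :=
  fun i => @ite _ (i ∈ PerSet x p) (Classical.dec _) (some (x i)) none

/-- `p` is an essential period of `x`. -/
def IsEssentialPeriod (x : ℤ → A) (p : ℕ) : Prop :=
  1 < p ∧ ∀ q : ℕ, 0 < q → q < p → ∃ i : ℤ, Skel x p (i + q) ≠ Skel x p i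

/-- `(P n)` is a period structure for `x`. -/
def IsPeriodStructure (x : ℤ → A) (P : ℕ → ℕ) : Prop :=
  StrictMono P ∧ (∀ n, IsEssentialPeriod x (P n)) ∧ (∀ n, P n ∣ P (n+1)) ∧
    ∀ i : ℤ, ∃ n, i ∈ PerSet x (P n)

/-- `q` divides the scale of the Toeplitz subshift `X`. -/
def DividesScale [TopologicalSpace A] (X : Set (ℤ → A)) (q : ℕ) : Prop :=
  ∃ (x : ℤ → A) (P : ℕ → ℕ),
    ToeplitzGenerates x X ∧ IsPeriodStructure x P ∧ ∃ n, q ∣ P n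

/-! ### Directive sequences and S-adic subshifts -/

/-- All morphisms in the directive sequence are non-erasing. -/
def NonErasing {A : ℕ → Type*} (τ : ∀ n, A (n+1) → List (A n)) : Prop :=
  ∀ n a, τ n a ≠ []

/-- The directive sequence has constant length. -/
def ConstantLength {A : ℕ → Type*} (τ : ∀ n, A (n+1) → List (A n)) : Prop :=
  ∀ n, ∀ a b : A (n+1), (τ n a).length = (τ n b).length

/-- The directive sequence is proper. -/
def ProperSeq {A : ℕ → Type*} (τ : ∀ n, A (n+1) → List (A n)) : Prop :=
  ∀ n, ∃ b c : A n, ∀ a : A (n+1), (τ n a).head? = some b ∧ (τ n a).getLast? = some c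

/-- `sadicWordAux τ n k a = τ_{[n, n+k)}(a)`. -/
def sadicWordAux {A : ℕ → Type*} (τ : ∀ n, A (n+1) → List (A n)) (n : ℕ) :
    ∀ k : ℕ, A (n + k) → List (A n)
  | 0, a => [a]
  | (k+1), a => (τ (n+k) a).flatMap (sadicWordAux τ n k)

/-- `word0 τ k a = τ_{[0, k)}(a)` for `a ∈ A k`. -/
def word0 {A : ℕ → Type*} (τ : ∀ n, A (n+1) → List (A n)) :
    ∀ k : ℕ, A k → List (A 0)
  | 0, a => [a]
  | (k+1), a => (τ k a).flatMap (word0 τ k)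

/-- The directive sequence is primitive. -/
def PrimitiveSeq {A : ℕ → Type*} (τ : ∀ n, A (n+1) → List (A n)) : Prop :=
  ∀ n, ∃ k : ℕ, 0 < k ∧ ∀ (a : A (n+k)) (b : A n), b ∈ sadicWordAux τ n k a

/-- The `n`-th level `X_τ^{(n)}` of the S-adic system generated by `τ`. -/
def XLevel {A : ℕ → Type*} (τ : ∀ n, A (n+1) → List (A n)) (n : ℕ) :
    Set (ℤ → A n) :=
  {y | ∀ (i : ℤ) (m : ℕ), ∃ k : ℕ, 0 < k ∧ ∃ a : A (n+k),
      (factorAt y i m).IsInfix (sadicWordAux τ n k a)}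

/-- The alphabet rank (`liminf_n |A_n|`) is at most `K`. -/
def AlphabetRankLE (A : ℕ → Type*) [∀ n, Fintype (A n)] (K : ℕ) : Prop :=
  ∀ N : ℕ, ∃ n, N ≤ n ∧ Fintype.card (A n) ≤ K

/-! ### Recognizability -/

/-- `z` is the bi-infinite concatenation `⋯σ(y(-1)).σ(y(0))σ(y(1))⋯`,
with `σ(y(0))` starting at coordinate `0`. -/
def IsConcat (σ : B → List C) (y : ℤ → B) (z : ℤ → C) : Prop :=
  ∃ c : ℤ → ℤ, c 0 = 0 ∧ (∀ j : ℤ, c (j + 1) = c j + (σ (y j)).length) ∧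
    ∀ (j : ℤ) (m : Fin (σ (y j)).length), z (c j + (m : ℕ)) = (σ (y j)).get m

/-- `(y, k)` is a centered `σ`-representation of `x` in `Y`. -/
def IsCenteredRep (σ : B → List C) (Y : Set (ℤ → B)) (x : ℤ → C)
    (y : ℤ → B) (k : ℕ) : Prop :=
  y ∈ Y ∧ k < (σ (y 0)).length ∧ IsConcat σ y (fun m => x (m - k))

/-- The morphism `σ` is recognizable in `Y`. -/
def RecognizableIn (σ : B → List C) (Y : Set (ℤ → B)) : Prop :=
  ∀ (x : ℤ → C) (y y' : ℤ → B) (k k' : ℕ),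
    IsCenteredRep σ Y x y k → IsCenteredRep σ Y x y' k' → y = y' ∧ k = k'

/-- The directive sequence `τ` is recognizable. -/
def RecognizableSeq {A : ℕ → Type*} (τ : ∀ n, A (n+1) → List (A n)) : Prop :=
  ∀ n, RecognizableIn (τ n) (XLevel τ (n+1))

/-! ### Conjugacy -/

/-- `(X, TX)` and `(Y, TY)` are conjugate via a homeomorphism. -/
def ConjugateBy [TopologicalSpace A] [TopologicalSpace B]
    (X : Set (ℤ → A)) (Y : Set (ℤ → B))
    (TX : (ℤ → A) → (ℤ → A)) (TY : (ℤ → B) → (ℤ → B)) : Prop :=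
  ∃ φ : ↥X ≃ₜ ↥Y, ∀ (x : ℤ → A) (hx : x ∈ X) (hx' : TX x ∈ X),
    (φ ⟨TX x, hx'⟩).1 = TY (φ ⟨x, hx⟩).1

/-- `(X, S)` and `(Y, S)` are conjugate subshifts. -/
def Conjugate [TopologicalSpace A] [TopologicalSpace B]
    (X : Set (ℤ → A)) (Y : Set (ℤ → B)) : Prop :=
  ConjugateBy X Y shift shift

/-- `X` is a strong Toeplitz subshift of rank `K`: it is conjugate to the S-adic subshift
of a constant-length, primitive, proper and recognizable directive sequence of
alphabet rank at most `K`. -/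
def IsStrongToeplitzOfRank [TopologicalSpace A] (X : Set (ℤ → A)) (K : ℕ) : Prop :=
  ∃ (B : ℕ → Type) (iB : ∀ n, Fintype (B n)) (σ : ∀ n, B (n+1) → List (B n)),
    NonErasing σ ∧ ConstantLength σ ∧ PrimitiveSeq σ ∧ ProperSeq σ ∧
    RecognizableSeq σ ∧ @AlphabetRankLE B iB K ∧
    @Conjugate A (B 0) _ ⊥ X (XLevel σ 0)

/-- `X` is conjugate to the S-adic subshift of a primitive, proper and recognizable
directive sequence of alphabet rank at most `K`. -/
def HasFiniteRankSAdicRep [TopologicalSpace A] (X : Set (ℤ → A)) (K : ℕ) : Prop :=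
  ∃ (B : ℕ → Type) (iB : ∀ n, Fintype (B n)) (σ : ∀ n, B (n+1) → List (B n)),
    NonErasing σ ∧ PrimitiveSeq σ ∧ ProperSeq σ ∧
    RecognizableSeq σ ∧ @AlphabetRankLE B iB K ∧
    @Conjugate A (B 0) _ ⊥ X (XLevel σ 0)

/-! ### Cuts, languages, built-from -/

/-- The set of words `{x[t+kp, t+(k+1)p) : k ∈ ℤ}`. -/
def cutWords (x : ℤ → A) (p t : ℕ) : Set (List A) :=
  {w | ∃ k : ℤ, w = factorAt x ((t : ℤ) + k * p) p}

/-- `(p, t)` is a strong rank-2 cut of `x`. -/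
def StrongRank2Cut (x : ℤ → A) (p t : ℕ) : Prop :=
  t < p ∧ ∃ u v : List A, u ≠ v ∧ cutWords x p t = {u, v}

/-- The language `L_n(X)`. -/
def Lang (n : ℕ) (X : Set (ℤ → A)) : Set (List A) :=
  {w | ∃ x ∈ X, ∃ i : ℤ, w = factorAt x i n}

/-- The maximal common prefix of `u` and `v` has length greater than `m`. -/
def CommonPrefixLongerThan (u v : List A) (m : ℕ) : Prop :=
  m + 1 ≤ u.length ∧ m + 1 ≤ v.length ∧ u.take (m+1) = v.take (m+1)

/-- The maximal common suffix of `u` and `v` has length greater than `m`. -/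
def CommonSuffixLongerThan (u v : List A) (m : ℕ) : Prop :=
  CommonPrefixLongerThan u.reverse v.reverse m

/-- `b = (β₀, (α₁, …, α_k), β₁)` is a building of the word `w` from `W`:
`w = β₀α₁⋯α_kβ₁`, all `αᵢ ∈ W`, `β₀` is a proper suffix of an element of `W`,
and `β₁` is a proper prefix of an element of `W`. -/
def IsBuilding (W : Set (List A)) (w : List A)
    (b : List A × List (List A) × List A) : Prop :=
  w = b.1 ++ b.2.1.flatten ++ b.2.2 ∧ (∀ α ∈ b.2.1, α ∈ W) ∧
  (∃ u ∈ W, b.1 <:+ u ∧ b.1 ≠ u) ∧ (∃ u ∈ W, b.2.2 <+: u ∧ b.2.2 ≠ u)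

/-- `w` is uniquely built from `W`. -/
def UniquelyBuiltFrom (W : Set (List A)) (w : List A) : Prop :=
  ∃! b : List A × List (List A) × List A, IsBuilding W w b

/-- `X` together with one of its points satisfies the strong rank-2 cut property. -/
def GoodCuts [TopologicalSpace A] (X : Set (ℤ → A)) (x : ℤ → A) : Prop :=
  ∀ p : ℕ, 0 < p → DividesScale X p → ∀ m : ℕ,
    ∃ q t : ℕ, StrongRank2Cut x q t ∧ p ∣ q ∧ DividesScale X q ∧
      ∃ u v : List A, u ≠ v ∧ cutWords x q t = {u, v} ∧
        CommonPrefixLongerThan u v m ∧ CommonSuffixLongerThan u v m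

/-! ### Euclidean pairs and buildings of bi-infinite sequences -/

/-- `{u, v}` is a Euclidean pair. -/
def EuclideanPair (u v : List A) : Prop :=
  ∃ (w : List A) (k l : ℕ),
    u = (List.replicate k w).flatten ∧ v = (List.replicate l w).flatten

/-- `α` is the distinguished prefix of `u` and `v`. -/
def IsDistinguishedPrefix (u v α : List A) : Prop :=
  α.length < u.length + v.length ∧
  ∀ x y : List A,
    (∃ l : List (List A), (∀ w ∈ l, w = u ∨ w = v) ∧ x = u ++ l.flatten) →
    (∃ l : List (List A), (∀ w ∈ l, w = u ∨ w = v) ∧ y = v ++ l.flatten) →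
    α.length + 1 ≤ x.length → α.length + 1 ≤ y.length →
    α <+: x ∧ α <+: y ∧ x[α.length]? ≠ y[α.length]?

/-- `β` is the distinguished suffix of `u` and `v`. -/
def IsDistinguishedSuffix (u v β : List A) : Prop :=
  IsDistinguishedPrefix u.reverse v.reverse β.reverse

/-- `(c, f)` is a building of the bi-infinite sequence `x` from `W`:
block `j` starts at position `c j` and carries the word `f j ∈ W`. -/
def IsBuildingSeq (W : Set (List A)) (x : ℤ → A) (c : ℤ → ℤ) (f : ℤ → List A) : Prop :=
  (∀ j : ℤ, f j ∈ W) ∧ (∀ j : ℤ, c (j + 1) = c j + (f j).length) ∧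
  ∀ (j : ℤ) (m : Fin (f j).length), x (c j + (m : ℕ)) = (f j).get m

/-- The subshift `X_{u,v}` of all sequences built from `{u, v}`. -/
def Xuv (u v : List A) : Set (ℤ → A) :=
  {x | ∃ (c : ℤ → ℤ) (f : ℤ → List A), IsBuildingSeq {u, v} x c f}

/-! ### Block-code conjugacies -/

/-- A conjugacy `φ : X → Y` admitting block width `2n+1`. -/
structure BlockConjugacy (A : Type*) (X Y : Set (ℤ → A)) (n : ℕ) where
  toFun : (ℤ → A) → (ℤ → A)
  invFun : (ℤ → A) → (ℤ → A)
  maps_to : ∀ x ∈ X, toFun x ∈ Y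
  maps_from : ∀ y ∈ Y, invFun y ∈ X
  left_inv : ∀ x ∈ X, invFun (toFun x) = x
  right_inv : ∀ y ∈ Y, toFun (invFun y) = y
  shift_comm : ∀ x ∈ X, toFun (shift x) = shift (toFun x)
  code : List A → A
  code_inv : List A → A
  code_spec : ∀ x ∈ X, ∀ i : ℤ, toFun x i = code (factorAt x (i - n) (2*n+1))
  code_inv_spec : ∀ y ∈ Y, ∀ i : ℤ, invFun y i = code_inv (factorAt y (i - n) (2*n+1))

/-! ### Parts, permutation action, χ -/

/-- `W` is a member of `Parts(X, p)`: a class of the common-`p`-skeleton relation. -/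
def SkelClass (X : Set (ℤ → A)) (p : ℕ) (W : Set (ℤ → A)) : Prop :=
  ∃ y ∈ X, W = {z ∈ X | Skel z p = Skel y p}

/-- The map `ψ̂` induced by a permutation `ψ` of `A^p`. -/
def permHat (p : ℕ) (ψ : Equiv.Perm (Fin p → A)) (x : ℤ → A) : ℤ → A :=
  fun i =>
    if h : (i.emod p).toNat < p then
      ψ (fun m : Fin p => x (i - i.emod p + (m : ℕ))) ⟨(i.emod p).toNat, h⟩
    else x i

/-- The relation `E_p` on compact subsets of `A^ℤ`. -/
def EpRel (p : ℕ) (K L : Set (ℤ → A)) : Prop :=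
  ∃ ψ : Equiv.Perm (Fin p → A), L = permHat p ψ '' K

/-- `W ∈ Parts_*(X, p)`. -/
def SkelClassStar (X : Set (ℤ → A)) (p : ℕ) (W : Set (ℤ → A)) : Prop :=
  SkelClass X p W ∧ ∀ y ∈ W, Skel y p (-1) = none ∧ Skel y p 0 ≠ none

/-- `length(W) = L` for `W ∈ Parts_*(X, p)`. -/
def HasLength (p : ℕ) (W : Set (ℤ → A)) (L : ℕ) : Prop :=
  ∀ y ∈ W, (∀ i : ℕ, i < L → Skel y p (i : ℤ) ≠ none) ∧ Skel y p (L : ℤ) = none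

/-- `Z ∈ χ(X, p)`. -/
def ChiMem (X : Set (ℤ → A)) (p : ℕ) (Z : Set (ℤ → A)) : Prop :=
  ∃ (W : Set (ℤ → A)) (L : ℕ), SkelClassStar X p W ∧ HasLength p W L ∧
    (∀ (W' : Set (ℤ → A)) (L' : ℕ),
      SkelClassStar X p W' → HasLength p W' L' → L' ≤ L) ∧
    Z = shiftBy ((L / 2 : ℕ) : ℤ) '' W

/-- `χ(X, p) E_p^fin χ(Y, p)`. -/
def ChiEpFin (X Y : Set (ℤ → A)) (p : ℕ) : Prop :=
  (∀ K, ChiMem X p K → ∃ L, ChiMem Y p L ∧ EpRel p K L) ∧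
  (∀ L, ChiMem Y p L → ∃ K, ChiMem X p K ∧ EpRel p K L)

/-! ### Single holes and fillings -/

/-- The Toeplitz sequence `x` has single holes with respect to the period structure `P`. -/
def SingleHoles (x : ℤ → A) (P : ℕ → ℕ) : Prop :=
  IsPeriodStructure x P ∧
  ∀ n, ∃! i : ℤ, 0 ≤ i ∧ i < (P n : ℤ) ∧ i ∉ PerSet x (P n)

/-- The Toeplitz subshift `X` has single holes. -/
def HasSingleHoles [TopologicalSpace A] (X : Set (ℤ → A)) : Prop :=
  ∃ (x : ℤ → A) (P : ℕ → ℕ), ToeplitzGenerates x X ∧ SingleHoles x P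

/-- `w` is the `(n, m)`-filling of `x` (for periods `pn < pm`). -/
def IsFilling (x : ℤ → A) (pn pm : ℕ) (w : List A) : Prop :=
  w.length = pm / pn - 1 ∧
  ∀ h : ℤ, 0 ≤ h → h < (pm : ℤ) → h ∉ PerSet x pm →
    ∀ (j : ℕ) (hj : j < w.length), w.get ⟨j, hj⟩ = x (h + (j+1) * pn)

/-- `u` is a `θ`-palindrome. -/
def ThetaPalindrome (θ : Equiv.Perm A) (u : List A) : Prop :=
  u.map (fun a => θ a) = u.reverse

/-! ### Nice symmetries -/

/-- `x` has nice symmetries with respect to `(p, q)`. -/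
def NiceSymmetries (x : ℤ → A) (p q : ℕ) : Prop :=
  ∃ m : ℤ, 1 < m ∧ m ≤ (q : ℤ) + 1 ∧
    (∀ k : ℕ, k < q / p →
      (Set.Ico ((k * p : ℕ) : ℤ) (((k+1) * p : ℕ) : ℤ) ⊆ PerSet x q ↔
       Set.Ico (m - ((k+1) * p : ℕ)) (m - (k * p : ℕ)) ⊆ PerSet x q)) ∧
    (∀ k k' : ℕ, k < q / p → k' < q / p →
      Set.Ico ((k * p : ℕ) : ℤ) (((k+1) * p : ℕ) : ℤ) ⊆ PerSet x q →
      Set.Ico ((k' * p : ℕ) : ℤ) (((k'+1) * p : ℕ) : ℤ) ⊆ PerSet x q →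
      (factorAt x ((k * p : ℕ) : ℤ) p = factorAt x ((k' * p : ℕ) : ℤ) p ↔
       factorAt x (m - ((k+1) * p : ℕ)) p = factorAt x (m - ((k'+1) * p : ℕ)) p))

/-- For some `p` dividing the scale of `X`, `x` has nice symmetries with respect to
`(p, q)` for all `q > p` with `p ∣ q` dividing the scale of `X`. -/
def NiceSymAll [TopologicalSpace A] (X : Set (ℤ → A)) (x : ℤ → A) : Prop :=
  ∃ p : ℕ, 0 < p ∧ DividesScale X p ∧
    ∀ q : ℕ, p < q → p ∣ q → DividesScale X q → NiceSymmetries x p q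

/-- A pair `(x, x')` is a centered left asymptotic pair. -/
def CenteredLeftAsymptoticPair (x x' : ℤ → A) : Prop :=
  (∀ i : ℤ, i < 0 → x i = x' i) ∧ x 0 ≠ x' 0

/-! ### Automorphism groups -/

/-- `e` is an automorphism of the subshift `(X, S)`. -/
def IsShiftAutomorphism [TopologicalSpace A] (X : Set (ℤ → A)) (e : ↥X ≃ₜ ↥X) : Prop :=
  ∀ (x : ℤ → A) (hx : x ∈ X) (hx' : shift x ∈ X),
    (e ⟨shift x, hx'⟩).1 = shift (e ⟨x, hx⟩).1

/-- The automorphism group of `(X, S)` is isomorphic, as a group, to `ℤ × ℤ/nℤ`. -/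
def AutGroupIsoZxZmod [TopologicalSpace A] (X : Set (ℤ → A)) (n : ℕ) : Prop :=
  ∃ Φ : {e : ↥X ≃ₜ ↥X // IsShiftAutomorphism X e} → ℤ × ZMod n,
    Function.Bijective Φ ∧
    ∀ e f g : {e : ↥X ≃ₜ ↥X // IsShiftAutomorphism X e},
      (∀ z : ↥X, g.1 z = e.1 (f.1 z)) → Φ g = Φ e + Φ f

/-! ### The Polish space of subshifts over `ℤ` -/

/-- A point of the space `𝐒` of all (compact, nonempty, shift-invariant) subshifts
over finite alphabets contained in `ℤ`. -/
structure SubshiftSpace : Type where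
  carrier : Set (ℤ → ℤ)
  nonempty : carrier.Nonempty
  compact : IsCompact carrier
  invariant : shift '' carrier = carrier

/-- The topology on `𝐒` induced by the languages `(L_n(X))_{n}`, with each
family of `n`-languages discrete; this coincides with the metric
`d(X,Y) = 2^{-min{n : L_n(X) ≠ L_n(Y)}}`. -/
instance : TopologicalSpace SubshiftSpace :=
  TopologicalSpace.induced
    (fun X : SubshiftSpace => (fun n => Lang n X.carrier : ℕ → Set (List ℤ)))
    (@Pi.topologicalSpace ℕ (fun _ => Set (List ℤ)) (fun _ => ⊥))

/-- The subset `𝐌 ⊆ 𝐒` of infinite minimal subshifts. -/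
def MinimalSet : Set SubshiftSpace :=
  {X | X.carrier.Infinite ∧ ∀ x ∈ X.carrier, X.carrier ⊆ closure (orbit x)}


lemma flatMap_cast (l : List ℕ) :
    (l.flatMap fun a => [(↑a : ℤ)]) = List.map (fun a : ℕ => (a:ℤ)) l := by
  induction l with
  | nil => rfl
  | cons h t ih => simp_all

lemma factorAt_eq {A : Type*} (x : ℤ → A) (z : ℤ) (n : ℕ) :
    factorAt x z n = (List.range n).map (fun j : ℕ => x (z + (j:ℤ))) := by
  show List.map _ _ = _
  simp [List.map_map]
  generalize List.range n = l
  induction l <;> simp_all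

lemma factorAt_congr {A : Type*} (x : ℤ → A) {i i' : ℤ} {n : ℕ}
    (h : factorAt x i n = factorAt x i' n) {r : ℤ} (h0 : 0 ≤ r) (h1 : r < (n:ℤ)) :
    x (i + r) = x (i' + r) := by
  have hr : r.toNat < n := by omega
  have key : ∀ (z : ℤ), (factorAt x z n)[r.toNat]? = some (x (z + r.toNat)) := by
    intro z
    rw [factorAt_eq, List.getElem?_map, List.getElem?_range hr, Option.map_some]
  have h2 : (factorAt x i n)[r.toNat]? = (factorAt x i' n)[r.toNat]? := by rw [h]
  rw [key, key, Int.toNat_of_nonneg h0] at h2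
  exact Option.some.inj h2

lemma pair_force {α : Type*} {u v X Y Z : α} (hX : X = u ∨ X = v) (hY : Y = u ∨ Y = v)
    (hZ : Z = u ∨ Z = v) (hXZ : X ≠ Z) (hYZ : Y ≠ Z) : X = Y := by
  rcases hX with rfl | rfl <;> rcases hY with rfl | rfl <;> rcases hZ with rfl | rfl <;> tauto

/-- Let `x` be aperiodic and `(p, t)`, `(q, s)` strong rank-2 cuts of `x`
with `p ∣ q`. Then they coincide: for the unique `k` with `t+kp ≤ s < t+(k+1)p`, either
`[t+kp, s) ⊆ Per_q(x)` or `[s, t+(k+1)p) ⊆ Per_q(x)`. -/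
theorem statement5 {A : Type*} [Fintype A] (x : ℤ → A) (hx : IsAperiodicPoint x)
    (p q t s : ℕ) (hcut1 : StrongRank2Cut x p t) (hcut2 : StrongRank2Cut x q s)
    (hdvd : p ∣ q) :
    ∀ k : ℤ, (t : ℤ) + k * p ≤ s → (s : ℤ) < (t : ℤ) + (k + 1) * p →
      (Set.Ico ((t : ℤ) + k * p) (s : ℤ) ⊆ PerSet x q ∨
       Set.Ico (s : ℤ) ((t : ℤ) + (k + 1) * p) ⊆ PerSet x q) := by
  obtain ⟨htp, u, v, huv, hW⟩ := hcut1
  obtain ⟨hsq, u', v', hu'v', hW'⟩ := hcut2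
  obtain ⟨d, hd⟩ := hdvd
  intro k hk1 hk2
  by_contra hcon
  push_neg at hcon
  obtain ⟨h1, h2⟩ := hcon
  rw [Set.not_subset] at h1 h2
  obtain ⟨i, hi1, hi2⟩ := h1
  obtain ⟨j, hj1, hj2⟩ := h2
  simp only [Set.mem_Ico] at hi1 hj1
  have hp0 : 0 < p := lt_of_le_of_lt (Nat.zero_le t) htp
  have hq0 : 0 < q := lt_of_le_of_lt (Nat.zero_le s) hsq
  have hpq : (p:ℤ) ≤ (q:ℤ) := by exact_mod_cast Nat.le_of_dvd hq0 ⟨d, hd⟩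
  have hdz : (q:ℤ) = (p:ℤ) * (d:ℤ) := by exact_mod_cast hd
  set a : ℤ := (t:ℤ) + k * p with ha
  have hap : (t:ℤ) + (k+1) * p = a + p := by rw [ha]; ring
  rw [hap] at hk2 hj1
  -- bounds
  have hia : a ≤ i := hi1.1
  have his : i < (s:ℤ) := hi1.2
  have hjs : (s:ℤ) ≤ j := hj1.1
  have hja : j < a + p := hj1.2
  -- witnesses of non-periodicity
  simp only [PerSet, Set.mem_setOf_eq, not_forall] at hi2 hj2
  obtain ⟨mi, hmi⟩ := hi2
  obtain ⟨mj, hmj⟩ := hj2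
  -- blocks take two values
  have hB : ∀ m : ℤ, factorAt x (a + m * q) p = u ∨ factorAt x (a + m * q) p = v := by
    intro m
    have hmem : factorAt x (a + m * q) p ∈ cutWords x p t := by
      refine ⟨k + m * d, ?_⟩
      have e : (t:ℤ) + (k + m * d) * p = a + m * q := by rw [ha, hdz]; ring
      rw [e]
    rw [hW] at hmem
    simpa using hmem
  have hC : ∀ m : ℤ, factorAt x ((s:ℤ) + m * q) q = u' ∨ factorAt x ((s:ℤ) + m * q) q = v' := by
    intro m
    have hmem : factorAt x ((s:ℤ) + m * q) q ∈ cutWords x q s := ⟨m, rfl⟩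
    rw [hW'] at hmem
    simpa using hmem
  -- transfer along equal p-blocks
  have hBrev : ∀ (z : ℤ), a ≤ z → z < a + p → ∀ m m' : ℤ,
      factorAt x (a + m * q) p = factorAt x (a + m' * q) p →
      x (z + m * q) = x (z + m' * q) := by
    intro z hz1 hz2 m m' h
    have h0 : (0:ℤ) ≤ z - a := by omega
    have h1 : z - a < (p:ℤ) := by omega
    have := factorAt_congr x h h0 h1
    have e1 : a + m * q + (z - a) = z + m * q := by ring
    have e2 : a + m' * q + (z - a) = z + m' * q := by ring
    rwa [e1, e2] at this
  -- transfer along equal q-blocks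
  have hCrev : ∀ (z : ℤ), (s:ℤ) ≤ z → z < (s:ℤ) + q → ∀ m m' : ℤ,
      factorAt x ((s:ℤ) + m * q) q = factorAt x ((s:ℤ) + m' * q) q →
      x (z + m * q) = x (z + m' * q) := by
    intro z hz1 hz2 m m' h
    have h0 : (0:ℤ) ≤ z - s := by omega
    have h1 : z - s < (q:ℤ) := by omega
    have := factorAt_congr x h h0 h1
    have e1 : (s:ℤ) + m * q + (z - s) = z + m * q := by ring
    have e2 : (s:ℤ) + m' * q + (z - s) = z + m' * q := by ring
    rwa [e1, e2] at this
  -- i and j lie in the p-block [a, a+p)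
  have hBi : ∀ m : ℤ, x (i + m * q) = x i ↔
      factorAt x (a + m * q) p = factorAt x (a + 0 * q) p := by
    have hBne : factorAt x (a + mi * q) p ≠ factorAt x (a + 0 * q) p := by
      intro h
      have := hBrev i hia (by omega) mi 0 h
      simp only [zero_mul, add_zero] at this
      exact hmi this
    intro m
    constructor
    · intro hxm
      by_contra hne
      have heq : factorAt x (a + m * q) p = factorAt x (a + mi * q) p :=
        pair_force (hB m) (hB mi) (hB 0) hne hBne
      have h2 := hBrev i hia (by omega) m mi heq
      rw [hxm] at h2
      exact hmi h2.symm
    · intro h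
      have := hBrev i hia (by omega) m 0 h
      simpa using this
  have hBj : ∀ m : ℤ, x (j + m * q) = x j ↔
      factorAt x (a + m * q) p = factorAt x (a + 0 * q) p := by
    have hBne : factorAt x (a + mj * q) p ≠ factorAt x (a + 0 * q) p := by
      intro h
      have := hBrev j (by omega) hja mj 0 h
      simp only [zero_mul, add_zero] at this
      exact hmj this
    intro m
    constructor
    · intro hxm
      by_contra hne
      have heq : factorAt x (a + m * q) p = factorAt x (a + mj * q) p :=
        pair_force (hB m) (hB mj) (hB 0) hne hBne
      have h2 := hBrev j (by omega) hja m mj heq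
      rw [hxm] at h2
      exact hmj h2.symm
    · intro h
      have := hBrev j (by omega) hja m 0 h
      simpa using this
  -- j lies in the q-block [s, s+q)
  have hjq : j < (s:ℤ) + q := by omega
  have hCj : ∀ m : ℤ, x (j + m * q) = x j ↔
      factorAt x ((s:ℤ) + m * q) q = factorAt x ((s:ℤ) + 0 * q) q := by
    have hCne : factorAt x ((s:ℤ) + mj * q) q ≠ factorAt x ((s:ℤ) + 0 * q) q := by
      intro h
      have := hCrev j hjs hjq mj 0 h
      simp only [zero_mul, add_zero] at this
      exact hmj this
    intro m
    constructor
    · intro hxm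
      by_contra hne
      have heq : factorAt x ((s:ℤ) + m * q) q = factorAt x ((s:ℤ) + mj * q) q :=
        pair_force (hC m) (hC mj) (hC 0) hne hCne
      have h2 := hCrev j hjs hjq m mj heq
      rw [hxm] at h2
      exact hmj h2.symm
    · intro h
      have := hCrev j hjs hjq m 0 h
      simpa using this
  -- i + q lies in the q-block [s, s+q)
  have hiq1 : (s:ℤ) ≤ i + q := by omega
  have hiq2 : i + q < (s:ℤ) + q := by omega
  have hCi : ∀ m : ℤ, x (i + m * q) = x i ↔
      factorAt x ((s:ℤ) + (m - 1) * q) q = factorAt x ((s:ℤ) + (-1) * q) q := by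
    have hid : ∀ m : ℤ, i + q + (m - 1) * q = i + m * q := by intro m; ring
    have hid0 : i + q + (-1) * q = i := by ring
    have hCne : factorAt x ((s:ℤ) + (mi - 1) * q) q ≠ factorAt x ((s:ℤ) + (-1) * q) q := by
      intro h
      have := hCrev (i + q) hiq1 hiq2 (mi - 1) (-1) h
      rw [hid mi, hid0] at this
      exact hmi this
    intro m
    constructor
    · intro hxm
      by_contra hne
      have heq : factorAt x ((s:ℤ) + (m - 1) * q) q = factorAt x ((s:ℤ) + (mi - 1) * q) q :=
        pair_force (hC (m - 1)) (hC (mi - 1)) (hC (-1)) hne hCne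
      have h2 := hCrev (i + q) hiq1 hiq2 (m - 1) (mi - 1) heq
      rw [hid m, hid mi] at h2
      rw [hxm] at h2
      exact hmi h2.symm
    · intro h
      have := hCrev (i + q) hiq1 hiq2 (m - 1) (-1) h
      rwa [hid m, hid0] at this
  -- the key recursion on q-blocks
  have key : ∀ m : ℤ,
      (factorAt x ((s:ℤ) + m * q) q = factorAt x ((s:ℤ) + 0 * q) q ↔
       factorAt x ((s:ℤ) + (m - 1) * q) q = factorAt x ((s:ℤ) + (-1) * q) q) := by
    intro m
    exact ((hCj m).symm.trans (hBj m)).trans ((hBi m).symm.trans (hCi m))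
  by_cases hcase : factorAt x ((s:ℤ) + (-1) * q) q = factorAt x ((s:ℤ) + 0 * q) q
  · -- all q-blocks equal: j would be q-periodic
    have hall : ∀ m : ℤ, factorAt x ((s:ℤ) + m * q) q = factorAt x ((s:ℤ) + 0 * q) q := by
      intro m
      induction m using Int.induction_on with
      | zero => rfl
      | succ n ih =>
        refine (key ((n:ℤ) + 1)).mpr ?_
        rw [show ((n:ℤ) + 1 - 1) = (n:ℤ) by ring]
        exact ih.trans hcase.symm
      | pred n ih =>
        have := (key (-(n:ℤ))).mp ih
        exact this.trans hcase
    exact hmj ((hCj mj).mpr (hall mj))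
  · -- blocks alternate: x has period 2q
    have flip : ∀ m : ℤ,
        (factorAt x ((s:ℤ) + (m + 1) * q) q = factorAt x ((s:ℤ) + 0 * q) q ↔
         ¬ factorAt x ((s:ℤ) + m * q) q = factorAt x ((s:ℤ) + 0 * q) q) := by
      intro m
      have k1 := key (m + 1)
      rw [show (m + 1 - 1) = m by ring] at k1
      constructor
      · intro h hm0
        have := k1.mp h
        exact hcase (hm0.symm.trans this |>.symm.trans rfl)
      · intro hm0
        refine k1.mpr ?_
        exact pair_force (hC m) (hC (-1)) (hC 0) hm0 hcase
    have key2 : ∀ m : ℤ,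
        factorAt x ((s:ℤ) + (m + 1 + 1) * q) q = factorAt x ((s:ℤ) + m * q) q := by
      intro m
      by_cases h : factorAt x ((s:ℤ) + m * q) q = factorAt x ((s:ℤ) + 0 * q) q
      · have hn1 : ¬ factorAt x ((s:ℤ) + (m+1) * q) q = factorAt x ((s:ℤ) + 0 * q) q :=
          fun hh => (flip m).mp hh h
        have h2 := (flip (m+1)).mpr hn1
        exact h2.trans h.symm
      · have h1 := (flip m).mpr h
        have h2 : ¬ factorAt x ((s:ℤ) + (m+1+1) * q) q = factorAt x ((s:ℤ) + 0 * q) q :=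
          fun hh => (flip (m+1)).mp hh h1
        exact pair_force (hC (m+1+1)) (hC m) (hC 0) h2 h
    have hper : ∀ n : ℤ, x (n + 2 * q) = x n := by
      intro n
      have hqz : (0:ℤ) < (q:ℤ) := by exact_mod_cast hq0
      have hdm := Int.mul_ediv_add_emod (n - s) (q:ℤ)
      set m : ℤ := (n - s) / q with hm
      set r : ℤ := (n - s) % q with hrr
      have hr0 : 0 ≤ r := Int.emod_nonneg _ (by omega)
      have hr1 : r < (q:ℤ) := Int.emod_lt_of_pos _ hqz
      have hnm : (s:ℤ) + m * q + r = n := by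
        rw [mul_comm]
        linarith
      have hc := factorAt_congr x (key2 m) hr0 hr1
      have e1 : (s:ℤ) + (m + 1 + 1) * q + r = n + 2 * q := by rw [← hnm]; ring
      have e2 : (s:ℤ) + m * q + r = n := hnm
      rwa [e1, e2] at hc
    exact hx ⟨2 * q, by positivity, fun n => by
      have h := hper n
      push_cast
      exact h⟩


end ToeplitzFR
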